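/- arXiv:0812.2111 — 3 statements merged into one kernel-verified Lean document; each statement's English description precedes it below -/
import Mathlib

section
/- If Γ is a closed subgroup of ℝⁿ isomorphic to ℝᵖ × ℤ^q, then its dual Γ* = {y ∈ ℝⁿ : ∀ x ∈ Γ, x·y ∈ ℤ} is isomorphic to ℝ^{n-(p+q)} × ℤ^q. -/
noncomputable section

abbrev Euc (n : ℕ) := EuclideanSpace ℝ (Fin n)

open Submodule in
private lemma real_smul_mem_aux {n : ℕ} {S : Set (Euc n)} (hc : IsClosed S)
    (hq : ∀ (a : ℚ) x, x ∈ S → (a : ℝ) • x ∈ S) (r : ℝ) {x : Euc n} (hx : x ∈ S) :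
    r • x ∈ S := by
  have hr : r ∈ closure (Set.range ((↑) : ℚ → ℝ)) := by
    rw [Rat.denseRange_cast.closure_eq]; trivial
  have hcont : Continuous fun s : ℝ => s • x := continuous_id.smul continuous_const
  have hmaps : Set.MapsTo (fun s : ℝ => s • x) (Set.range ((↑) : ℚ → ℝ)) S := by
    rintro s ⟨a, rfl⟩
    exact hq a x hx
  have := map_mem_closure hcont hr hmaps
  rwa [hc.closure_eq] at this

set_option maxHeartbeats 2000000 in
set_option synthInstance.maxHeartbeats 200000 in
open Submodule Module in
/-- If Γ is a closed subgroup of ℝⁿ topologically isomorphic to ℝᵖ × ℤ^q, then its dual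
Γ* = {y | ∀ x ∈ Γ, x·y ∈ ℤ} is topologically isomorphic to ℝ^{n-(p+q)} × ℤ^q. -/
theorem dual_type (n p q : ℕ) (Γ : AddSubgroup (Euc n)) (hΓ : IsClosed (Γ : Set (Euc n)))
    (htype : ∃ e : Γ ≃+ ((Fin p → ℝ) × (Fin q → ℤ)), Continuous e ∧ Continuous e.symm)
    (Δ : AddSubgroup (Euc n))
    (hΔ : (Δ : Set (Euc n)) =
      {y : Euc n | ∀ x ∈ (Γ : Set (Euc n)), ∃ m : ℤ, (inner ℝ x y : ℝ) = (m : ℝ)}) :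
    ∃ e : Δ ≃+ ((Fin (n - (p + q)) → ℝ) × (Fin q → ℤ)), Continuous e ∧ Continuous e.symm := by
  classical
  obtain ⟨e, he, he'⟩ := htype
  have hmemΔ : ∀ y : Euc n, y ∈ Δ ↔ ∀ x ∈ (Γ : Set (Euc n)), ∃ m : ℤ,
      (inner ℝ x y : ℝ) = (m : ℝ) := fun y => by
    have := Set.ext_iff.mp hΔ y
    simpa using this
  -- the vector part of Γ
  set Vset : Set (Euc n) := {x | ∃ g : Γ, (g : Euc n) = x ∧ (e g).2 = 0} with hVset
  have hVΓ : Vset ⊆ (Γ : Set (Euc n)) := by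
    rintro x ⟨g, rfl, -⟩; exact g.2
  have hVclosed : IsClosed Vset := by
    have h1 : IsClosed (⇑e ⁻¹' {z : (Fin p → ℝ) × (Fin q → ℤ) | z.2 = 0}) := by
      have : IsClosed {z : (Fin p → ℝ) × (Fin q → ℤ) | z.2 = 0} :=
        isClosed_singleton.preimage continuous_snd
      exact this.preimage he
    have h2 := (hΓ.isClosedEmbedding_subtypeVal.isClosedMap _ h1)
    convert h2 using 1
    ext x
    constructor
    · rintro ⟨g, rfl, hg⟩; exact ⟨g, hg, rfl⟩
    · rintro ⟨g, hg, rfl⟩; exact ⟨g, rfl, hg⟩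
  have hVrat : ∀ (a : ℚ) x, x ∈ Vset → (a : ℝ) • x ∈ Vset := by
    rintro a x ⟨g, rfl, hg⟩
    set w : (Fin p → ℝ) × (Fin q → ℤ) := ((a : ℝ) • (e g).1, 0) with hw
    refine ⟨e.symm w, ?_, by simp [hw]⟩
    have key : a.den • e.symm w = a.num • g := by
      apply e.injective
      rw [map_nsmul, map_zsmul, e.apply_symm_apply]
      have : a.den • w = a.num • e g := by
        have h2 : (e g) = ((e g).1, 0) := by rw [← hg]
        rw [h2]
        ext i
        · show a.den • ((a:ℝ) • (e g).1) i = a.num • (e g).1 i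
          simp only [Pi.smul_apply, smul_eq_mul, nsmul_eq_mul, zsmul_eq_mul]
          rw [← mul_assoc]
          congr 1
          rw [mul_comm]
          exact_mod_cast congrArg (Rat.cast : ℚ → ℝ) (Rat.mul_den_eq_num a)
        · show (a.den • (0 : Fin q → ℤ)) i = (a.num • (0 : Fin q → ℤ)) i
          simp
      rw [this]
    have key2 : (a.den : ℝ) • (e.symm w : Euc n) = (a.num : ℝ) • (g : Euc n) := by
      have h := congrArg Γ.subtype key
      simp only [map_nsmul, map_zsmul, AddSubgroup.coe_subtype] at h
      rwa [← Nat.cast_smul_eq_nsmul ℝ, ← Int.cast_smul_eq_zsmul ℝ] at h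
    have hden : (a.den : ℝ) ≠ 0 := by exact_mod_cast a.den_nz
    rw [Rat.cast_def, div_eq_inv_mul, mul_smul, ← key2, inv_smul_smul₀ hden]
  -- V as a submodule
  set Vs : Submodule ℝ (Euc n) :=
    { carrier := Vset
      add_mem' := by
        rintro x y ⟨g, rfl, hg⟩ ⟨g', rfl, hg'⟩
        exact ⟨g + g', rfl, by simp [hg, hg']⟩
      zero_mem' := ⟨0, by simp, by simp⟩
      smul_mem' := fun r x hx => real_smul_mem_aux hVclosed hVrat r hx } with hVs
  have hVsmem : ∀ x : Euc n, x ∈ Vs ↔ x ∈ Vset := fun _ => Iff.rfl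
  -- dim V = p
  have hVdim : finrank ℝ Vs = p := by
    have hψadd : ∀ a b : Fin p → ℝ,
        ((e.symm (a + b, 0) : Γ) : Euc n) = ↑(e.symm (a, 0)) + ↑(e.symm (b, 0)) := by
      intro a b
      have : ((a, 0) : (Fin p → ℝ) × (Fin q → ℤ)) + (b, 0) = (a + b, 0) := by
        ext <;> simp
      rw [← this, map_add, AddSubgroup.coe_add]
    set ψ : (Fin p → ℝ) →+ Euc n :=
      AddMonoidHom.mk' (fun a => ↑(e.symm (a, 0))) (fun a b => hψadd a b) with hψ
    have hψcont : Continuous ψ := by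
      exact continuous_subtype_val.comp (he'.comp (continuous_id.prodMk continuous_const))
    set ψL := (ψ.toRealLinearMap hψcont).toLinearMap with hψL
    have hψLapp : ∀ a, ψL a = ↑(e.symm (a, 0)) := fun a => rfl
    have hrange : LinearMap.range ψL = Vs := by
      ext x
      constructor
      · rintro ⟨a, rfl⟩
        exact ⟨e.symm (a, 0), rfl, by simp⟩
      · rintro ⟨g, rfl, hg⟩
        refine ⟨(e g).1, ?_⟩
        rw [hψLapp]
        congr 1
        have : ((e g).1, (0 : Fin q → ℤ)) = e g := by rw [← hg]
        rw [this, e.symm_apply_apply]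
    have hker : LinearMap.ker ψL = ⊥ := by
      rw [LinearMap.ker_eq_bot]
      intro a b hab
      rw [hψLapp, hψLapp] at hab
      have h1 : e.symm (a, 0) = e.symm (b, 0) := Subtype.coe_injective hab
      have h2 := congrArg (fun z => (e z).1) h1
      simpa using h2
    have := ψL.finrank_range_add_finrank_ker
    rw [hrange, hker, finrank_bot, add_zero, Module.finrank_fin_fun] at this
    exact this
  -- the lattice part
  set LZ : Submodule ℤ (Euc n) :=
    AddSubgroup.toIntSubmodule Γ ⊓ (Vsᗮ.restrictScalars ℤ) with hLZ
  have hLZmem : ∀ x : Euc n, x ∈ LZ ↔ x ∈ Γ ∧ x ∈ Vsᗮ := fun _ => Iff.rfl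
  have hVperp : ∀ x, x ∈ Vs → x ∈ Vsᗮ → x = (0 : Euc n) := by
    intro x h1 h2
    have := (Submodule.mem_orthogonal _ _).mp h2 x h1
    exact inner_self_eq_zero.mp this
  -- LZ is discrete
  have hdisc : DiscreteTopology LZ := by
    rw [discreteTopology_iff_isOpen_singleton_zero]
    have hS : IsOpen (⇑e ⁻¹' {z : (Fin p → ℝ) × (Fin q → ℤ) | z.2 = 0}) := by
      have : IsOpen {z : (Fin p → ℝ) × (Fin q → ℤ) | z.2 = 0} :=
        (isOpen_discrete ({0} : Set (Fin q → ℤ))).preimage continuous_snd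
      exact this.preimage he
    obtain ⟨O, hO, hOeq⟩ := isOpen_induced_iff.mp hS
    have h0O : (0 : Euc n) ∈ O := by
      have h0S : (⟨0, Γ.zero_mem⟩ : Γ) ∈ ⇑e ⁻¹' {z | z.2 = 0} := by
        have h00 : (⟨0, Γ.zero_mem⟩ : Γ) = 0 := rfl
        show (e ⟨0, Γ.zero_mem⟩).2 = 0
        rw [h00, map_zero]
        rfl
      rw [← hOeq] at h0S
      exact h0S
    have : ({0} : Set LZ) = (Subtype.val : LZ → Euc n) ⁻¹' O := by
      ext x
      simp only [Set.mem_singleton_iff, Set.mem_preimage]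
      constructor
      · rintro rfl; exact h0O
      · intro hxO
        obtain ⟨hxΓ, hxP⟩ := (hLZmem x).mp x.2
        have : (⟨↑x, hxΓ⟩ : Γ) ∈ Subtype.val ⁻¹' O := hxO
        rw [hOeq] at this
        have hxV : (x : Euc n) ∈ Vset := ⟨⟨↑x, hxΓ⟩, rfl, this⟩
        exact Subtype.coe_injective (hVperp _ hxV hxP)
    rw [this]
    exact hO.preimage continuous_subtype_val
  -- LZ ≃ ℤ^q
  set incl : LZ →+ Γ :=
    AddMonoidHom.mk' (fun x => ⟨↑x, ((hLZmem _).mp x.2).1⟩) (fun x y => by ext; rfl) with hincl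
  set φ : LZ →+ (Fin q → ℤ) :=
    (AddMonoidHom.snd (Fin p → ℝ) (Fin q → ℤ)).comp (e.toAddMonoidHom.comp incl) with hφ
  have hφbij : Function.Bijective φ := by
    constructor
    · intro x y hxy
      have hsub : (e (incl x - incl y)).2 = 0 := by
        rw [map_sub]
        show (e (incl x)).2 - (e (incl y)).2 = 0
        have hxy' : (e (incl x)).2 = (e (incl y)).2 := hxy
        rw [hxy', sub_self]
      have hV : ((x : Euc n) - y) ∈ Vset := ⟨incl x - incl y, rfl, hsub⟩
      have hP : ((x : Euc n) - y) ∈ Vsᗮ :=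
        sub_mem ((hLZmem _).mp x.2).2 ((hLZmem _).mp y.2).2
      have := hVperp _ hV hP
      exact Subtype.coe_injective (by rwa [sub_eq_zero] at this)
    · intro m
      set g : Γ := e.symm (0, m) with hg
      set v := (orthogonalProjection Vs (g : Euc n) : Euc n) with hv
      have hvV : v ∈ Vset := (orthogonalProjection Vs (g : Euc n)).2
      obtain ⟨gv, hgv, hgv2⟩ := hvV
      have hlΓ : ((g : Euc n) - v) ∈ Γ := by
        rw [← hgv]; exact sub_mem g.2 gv.2
      have hlP : ((g : Euc n) - v) ∈ Vsᗮ := sub_starProjection_mem_orthogonal _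
      refine ⟨⟨(g : Euc n) - v, (hLZmem _).mpr ⟨hlΓ, hlP⟩⟩, ?_⟩
      show (e ⟨(g : Euc n) - v, hlΓ⟩).2 = m
      have : (⟨(g : Euc n) - v, hlΓ⟩ : Γ) = g - gv := by ext; simp [hgv]
      rw [this, map_sub]
      show (e g).2 - (e gv).2 = m
      rw [hgv2, hg, e.apply_symm_apply]
      simp
  have hLZrank : finrank ℤ LZ = q := by
    have eqv := ((AddEquiv.ofBijective φ hφbij).toIntLinearEquiv : LZ ≃ₗ[ℤ] (Fin q → ℤ))
    rw [eqv.finrank_eq, Module.finrank_pi]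
    simp
  -- the span U of the lattice part
  set U : Submodule ℝ (Euc n) := span ℝ (LZ : Set (Euc n)) with hU
  have hLU : (LZ : Set (Euc n)) ⊆ (U : Set (Euc n)) := subset_span
  have hUperp : U ≤ Vsᗮ := span_le.mpr (fun x hx => ((hLZmem x).mp hx).2)
  set f : U →ₗ[ℤ] Euc n := U.subtype.restrictScalars ℤ with hf
  set L₀ : Submodule ℤ U := LZ.comap f with hL₀
  have h_img : f '' L₀ = LZ := by
    ext x
    constructor
    · rintro ⟨y, hyL, rfl⟩; exact hyL
    · intro hx; exact ⟨⟨x, hLU hx⟩, hx, rfl⟩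
  have hdisc₀ : DiscreteTopology L₀ := by
    refine DiscreteTopology.preimage_of_continuous_injective (LZ : Set (Euc n)) ?_
      (injective_subtype _)
    exact LinearMap.continuous_of_finiteDimensional U.subtype
  have hzlat : IsZLattice ℝ L₀ := ⟨by
    rw [← (Submodule.map_injective_of_injective (injective_subtype U)).eq_iff,
      Submodule.map_span, Submodule.map_top, range_subtype]
    show span ℝ (U.subtype '' (L₀ : Set U)) = U
    rw [show U.subtype '' (L₀ : Set U) = (LZ : Set (Euc n)) from h_img]⟩
  have hL₀rank : finrank ℤ L₀ = q := by
    have hmap : L₀.map f = LZ := by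
      apply SetLike.ext'
      rw [Submodule.map_coe]
      exact h_img
    have eqv : L₀ ≃ₗ[ℤ] LZ :=
      (Submodule.equivMapOfInjective f (injective_subtype U) L₀).trans
        (LinearEquiv.ofEq _ _ hmap)
    rw [eqv.finrank_eq, hLZrank]
  have hUq : finrank ℝ U = q := by
    rw [← ZLattice.rank ℝ L₀, hL₀rank]
  -- a ℤ-basis of the lattice which is an ℝ-basis of U
  have : Module.Finite ℤ L₀ := ZLattice.module_finite ℝ L₀
  have : Module.Free ℤ L₀ := ZLattice.module_free ℝ L₀
  set b₁ : Basis (Fin q) ℤ L₀ :=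
    (Module.Free.chooseBasis ℤ L₀).reindex (Fintype.equivFinOfCardEq
      (by rw [← Module.finrank_eq_card_chooseBasisIndex, hL₀rank])) with hb₁
  set B : Basis (Fin q) ℝ U := b₁.ofZLatticeBasis ℝ L₀ with hB
  have hBL : ∀ i, ((B i : U) : Euc n) ∈ LZ := by
    intro i
    rw [hB, b₁.ofZLatticeBasis_apply ℝ L₀ i]
    exact (b₁ i).2
  have hBspan : span ℤ (Set.range B) = L₀ := b₁.ofZLatticeBasis_span ℝ
  -- dual basis for the lattice in U
  have hnd : LinearMap.BilinForm.Nondegenerate (innerₗ U) := by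
    refine ⟨fun x hx => ?_, fun x hx => ?_⟩
    · exact inner_self_eq_zero.mp (hx x)
    · exact inner_self_eq_zero.mp (hx x)
  set D : Basis (Fin q) ℝ U := LinearMap.BilinForm.dualBasis (innerₗ U) hnd B with hD
  set d : Fin q → Euc n := fun i => ((D i : U) : Euc n) with hd
  have hdU : ∀ i, d i ∈ U := fun i => (D i).2
  have hBd : ∀ i j, (inner ℝ ((B j : U) : Euc n) (d i) : ℝ) = if j = i then 1 else 0 := by
    intro i j
    have h1 := LinearMap.BilinForm.apply_dualBasis_left (B := innerₗ U) hnd B i j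
    have h2 : (inner ℝ (D i) (B j) : ℝ) = if j = i then 1 else 0 := h1
    rw [hd, ← Submodule.coe_inner, real_inner_comm]
    exact h2
  -- the free part T
  set T : Submodule ℝ (Euc n) := (Vs ⊔ U)ᗮ with hT
  have hVUinf : Vs ⊓ U = ⊥ := by
    rw [eq_bot_iff]
    rintro x ⟨h1, h2⟩
    exact hVperp x h1 (hUperp h2)
  have hsup : finrank ℝ ↥(Vs ⊔ U) = p + q := by
    have := Submodule.finrank_sup_add_finrank_inf_eq Vs U
    rw [hVUinf, finrank_bot, add_zero, hVdim, hUq] at this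
    exact this
  have hpqn : p + q ≤ n := by
    have := Submodule.finrank_le (Vs ⊔ U)
    rwa [hsup, finrank_euclideanSpace_fin] at this
  have hTdim : finrank ℝ T = n - (p + q) := by
    have h1 := Submodule.finrank_add_finrank_orthogonal (K := Vs ⊔ U)
    rw [hsup, finrank_euclideanSpace_fin] at h1
    have h2 : finrank ℝ T = finrank ℝ ↥((Vs ⊔ U)ᗮ) := rfl
    omega
  set tb : Basis (Fin (n - (p + q))) ℝ T :=
    (Module.finBasis ℝ T).reindex (finCongr hTdim) with htb
  have hTV : T ≤ Vsᗮ := Submodule.orthogonal_le le_sup_left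
  have hBT : ∀ (j : Fin q) (w : Euc n), w ∈ T → (inner ℝ ((B j : U) : Euc n) w : ℝ) = 0 := by
    intro j w hw
    exact (Submodule.mem_orthogonal _ _).mp hw _ (le_sup_right (a := Vs) ((B j).2))
  -- characterization of Δ
  have hmemΔ2 : ∀ y : Euc n, y ∈ Δ ↔
      (y ∈ Vsᗮ ∧ ∀ i, ∃ m : ℤ, (inner ℝ ((B i : U) : Euc n) y : ℝ) = (m : ℝ)) := by
    intro y
    rw [hmemΔ y]
    constructor
    · intro h
      constructor
      · rw [Submodule.mem_orthogonal]
        intro u hu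
        by_contra hc
        have hu' : ((2 * (inner ℝ u y : ℝ))⁻¹ • u) ∈ Vs := Vs.smul_mem _ hu
        obtain ⟨m, hm⟩ := h _ (hVΓ hu')
        rw [real_inner_smul_left] at hm
        have h2 : (2 * (inner ℝ u y : ℝ))⁻¹ * (inner ℝ u y : ℝ) = 2⁻¹ := by
          rw [mul_inv, mul_assoc, inv_mul_cancel₀ hc, mul_one]
        rw [h2] at hm
        have h3 : ((2 * m : ℤ) : ℝ) = ((1 : ℤ) : ℝ) := by push_cast; linarith
        have h4 := Int.cast_injective (α := ℝ) h3
        omega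
      · intro i
        exact h _ (((hLZmem _).mp (hBL i)).1)
    · rintro ⟨hperp, hint⟩ x hxΓ
      set v : Euc n := (orthogonalProjection Vs x : Euc n) with hv
      have hvV : v ∈ Vs := (orthogonalProjection Vs x).2
      have hvΓ : v ∈ Γ := hVΓ hvV
      have hlP : (x - v) ∈ Vsᗮ := sub_starProjection_mem_orthogonal x
      have hlLZ : (x - v) ∈ LZ := (hLZmem _).mpr ⟨sub_mem hxΓ hvΓ, hlP⟩
      have hlU : (x - v) ∈ U := hLU hlLZ
      have hl₀ : (⟨x - v, hlU⟩ : U) ∈ L₀ := hlLZ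
      rw [← hBspan] at hl₀
      obtain ⟨c, hc⟩ := (mem_span_range_iff_exists_fun ℤ).mp hl₀
      choose m hm using hint
      refine ⟨∑ i, c i * m i, ?_⟩
      have hsplit : (inner ℝ x y : ℝ) = (inner ℝ v y : ℝ) + (inner ℝ (x - v) y : ℝ) := by
        rw [← inner_add_left, add_sub_cancel]
      have h0 : (inner ℝ v y : ℝ) = 0 := (Submodule.mem_orthogonal _ _).mp hperp v hvV
      have hxv : (x - v) = ∑ i, (c i : ℝ) • ((B i : U) : Euc n) := by
        have h5 := congrArg (fun z : U => (z : Euc n)) hc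
        simp only [AddSubmonoidClass.coe_finset_sum] at h5
        rw [← h5]
        congr 1
        ext i
        rw [← Int.cast_smul_eq_zsmul ℝ (c i) (B i)]
        rfl
      have hiter : (inner ℝ (x - v) y : ℝ) = ∑ i, (c i : ℝ) * (m i : ℝ) := by
        rw [hxv, sum_inner]
        congr 1
        ext i
        rw [real_inner_smul_left, hm i]
      rw [hsplit, h0, hiter, zero_add]
      push_cast
      rfl
  -- the building blocks of the equivalence
  set projT := orthogonalProjection T with hprojT
  set Φfst : Euc n →ₗ[ℝ] (Fin (n - (p + q)) → ℝ) :=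
    (tb.equivFun : T ≃ₗ[ℝ] _).toLinearMap.comp (projT.toLinearMap) with hΦfst
  have hΦfstapp : ∀ x : Euc n, Φfst x = tb.equivFun (projT x) := fun _ => rfl
  set Φint : Δ → Fin q → ℤ :=
    fun y i => ⌊(inner ℝ ((B i : U) : Euc n) ((y : Euc n)) : ℝ)⌋ with hΦint
  have hΦintspec : ∀ (y : Δ) i,
      ((Φint y i : ℤ) : ℝ) = (inner ℝ ((B i : U) : Euc n) ((y : Euc n)) : ℝ) := by
    intro y i
    obtain ⟨m, hm⟩ := ((hmemΔ2 _).mp y.2).2 i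
    simp only [hΦint, hm, Int.floor_intCast]
  set Ψ : (Fin (n - (p + q)) → ℝ) × (Fin q → ℤ) → Euc n :=
    fun cm => (∑ i, cm.1 i • (tb i : Euc n)) + ∑ i, ((cm.2 i : ℝ)) • d i with hΨ
  have hΨperp : ∀ cm, Ψ cm ∈ Vsᗮ := by
    intro cm
    exact add_mem (sum_mem fun i _ => Submodule.smul_mem _ _ (hTV (tb i).2))
      (sum_mem fun i _ => Submodule.smul_mem _ _ (hUperp (hdU i)))
  have hBsum : ∀ (c : Fin q → ℝ) (j : Fin q),
      (inner ℝ ((B j : U) : Euc n) (∑ i, c i • d i) : ℝ) = c j := by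
    intro c j
    rw [inner_sum]
    have h2 : ∀ i, (inner ℝ ((B j : U) : Euc n) (c i • d i) : ℝ) = if j = i then c i else 0 := by
      intro i
      rw [real_inner_smul_right, hBd i j]
      by_cases h : j = i <;> simp [h]
    rw [Finset.sum_congr rfl fun i _ => h2 i]
    simp
  have hΨinner : ∀ cm j, (inner ℝ ((B j : U) : Euc n) (Ψ cm) : ℝ) = (cm.2 j : ℝ) := by
    intro cm j
    rw [hΨ]
    dsimp only
    rw [inner_add_right, inner_sum]
    have h1 : ∀ i, (inner ℝ ((B j : U) : Euc n) (cm.1 i • (tb i : Euc n)) : ℝ) = 0 := by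
      intro i; rw [real_inner_smul_right, hBT j _ (tb i).2, mul_zero]
    rw [Finset.sum_congr rfl fun i _ => h1 i, Finset.sum_const_zero, zero_add,
      hBsum (fun i => (cm.2 i : ℝ)) j]
  have hΨmem : ∀ cm, Ψ cm ∈ Δ :=
    fun cm => (hmemΔ2 _).mpr ⟨hΨperp cm, fun j => ⟨cm.2 j, hΨinner cm j⟩⟩
  have hprojtb : ∀ i, projT ((tb i : Euc n)) = tb i :=
    fun i => orthogonalProjection_mem_subspace_eq_self (tb i)
  have hTperp : Tᗮ = Vs ⊔ U := Submodule.orthogonal_orthogonal _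
  have hprojd : ∀ i, projT (d i) = 0 := by
    intro i
    exact Submodule.orthogonalProjectionOnto_apply_of_mem_orthogonal
      (by rw [hTperp]; exact le_sup_right (a := Vs) (hdU i))
  have hprojΨ : ∀ cm, projT (Ψ cm) = ∑ i, cm.1 i • tb i := by
    intro cm
    rw [hΨ]
    dsimp only
    rw [map_add, map_sum, map_sum]
    simp [hprojtb, hprojd]
  have hUinj : ∀ w w', w ∈ U → w' ∈ U →
      (∀ j, (inner ℝ ((B j : U) : Euc n) w : ℝ) = (inner ℝ ((B j : U) : Euc n) w' : ℝ)) →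
      w = w' := by
    intro w w' hw hw' hj
    set z : U := ⟨w - w', sub_mem hw hw'⟩ with hz'
    have hzU : ∀ j, (inner ℝ (B j) z : ℝ) = 0 := by
      intro j
      rw [Submodule.coe_inner]
      show (inner ℝ ((B j : U) : Euc n) (w - w') : ℝ) = 0
      rw [inner_sub_right, hj j, sub_self]
    have hzz : (inner ℝ z z : ℝ) = 0 := by
      have h6 : (inner ℝ (∑ j, B.repr z j • B j) z : ℝ) = 0 := by
        rw [sum_inner]
        exact Finset.sum_eq_zero fun j _ => (real_inner_smul_left (B j) z (B.repr z j)).trans (by rw [hzU j, mul_zero])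
      rwa [B.sum_repr z] at h6
    have := inner_self_eq_zero.mp hzz
    have h0 : w - w' = 0 := by
      have := congrArg (fun t : U => (t : Euc n)) this
      exact this
    exact sub_eq_zero.mp h0
  -- the equivalence
  set Φ : Δ → (Fin (n - (p + q)) → ℝ) × (Fin q → ℤ) := fun y => (Φfst ↑y, Φint y) with hΦdef
  set Ψ' : (Fin (n - (p + q)) → ℝ) × (Fin q → ℤ) → Δ := fun cm => ⟨Ψ cm, hΨmem cm⟩ with hΨ'def
  have hright : ∀ cm, Φ (Ψ' cm) = cm := by
    intro cm
    rw [hΦdef, hΨ'def]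
    dsimp only
    refine Prod.ext ?_ ?_
    · show Φfst (Ψ cm) = cm.1
      rw [hΦfstapp, hprojΨ]
      have h3 : ∑ i, cm.1 i • tb i = tb.equivFun.symm cm.1 := (Basis.equivFun_symm_apply tb cm.1).symm
      rw [h3, LinearEquiv.apply_symm_apply]
    · show Φint ⟨Ψ cm, hΨmem cm⟩ = cm.2
      funext i
      apply Int.cast_injective (α := ℝ)
      rw [hΦintspec ⟨Ψ cm, hΨmem cm⟩ i]
      exact hΨinner cm i
  have hleft : ∀ y : Δ, Ψ' (Φ y) = y := by
    intro y
    rw [hΦdef, hΨ'def]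
    apply Subtype.ext
    show Ψ (Φfst ↑y, Φint y) = (y : Euc n)
    have e1 : ∑ i, (Φfst (y : Euc n)) i • (tb i : Euc n) = ((projT (y : Euc n) : T) : Euc n) := by
      rw [hΦfstapp]
      have h4 : (projT (y : Euc n) : T) = tb.equivFun.symm (tb.equivFun (projT ↑y)) :=
        (LinearEquiv.symm_apply_apply _ _).symm
      conv_rhs => rw [h4, Basis.equivFun_symm_apply]
      rw [AddSubmonoidClass.coe_finset_sum]
      rfl
    have e2 : ∑ i, ((Φint y i : ℝ)) • d i
        = ∑ i, (inner ℝ ((B i : U) : Euc n) ((y : Euc n)) : ℝ) • d i := by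
      refine Finset.sum_congr rfl fun i _ => ?_
      rw [hΦintspec y i]
    have hu1 : ((y : Euc n) - ↑(projT ↑y)) ∈ Vs ⊔ U := by
      rw [← hTperp]
      exact sub_starProjection_mem_orthogonal _
    have hu2 : ((y : Euc n) - ↑(projT ↑y)) ∈ Vsᗮ :=
      sub_mem ((hmemΔ2 _).mp y.2).1 (hTV (projT (y : Euc n)).2)
    have huU : ((y : Euc n) - ↑(projT ↑y)) ∈ U := by
      obtain ⟨v₀, hv₀, u₀, hu₀, hvu⟩ := Submodule.mem_sup.mp hu1
      have hv0 : v₀ = 0 := by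
        have hin : (inner ℝ v₀ ((y : Euc n) - ↑(projT ↑y)) : ℝ) = 0 :=
          (Submodule.mem_orthogonal _ _).mp hu2 v₀ hv₀
        rw [← hvu, inner_add_right] at hin
        have h5 : (inner ℝ v₀ u₀ : ℝ) = 0 :=
          (Submodule.mem_orthogonal _ _).mp (hUperp hu₀) v₀ hv₀
        rw [h5, add_zero] at hin
        exact inner_self_eq_zero.mp hin
      rw [← hvu, hv0, zero_add]
      exact hu₀
    have hfin : ∑ i, (inner ℝ ((B i : U) : Euc n) ((y : Euc n)) : ℝ) • d i
        = (y : Euc n) - ↑(projT ↑y) := by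
      apply hUinj _ _ (sum_mem fun i _ => Submodule.smul_mem _ _ (hdU i)) huU
      intro j
      rw [hBsum (fun i => (inner ℝ ((B i : U) : Euc n) ((y : Euc n)) : ℝ)) j]
      rw [inner_sub_right, hBT j _ (projT (y : Euc n)).2, sub_zero]
    show (∑ i, (Φfst (y : Euc n)) i • (tb i : Euc n)) + ∑ i, ((Φint y i : ℝ)) • d i = (y : Euc n)
    rw [e1, e2, hfin]
    exact add_sub_cancel _ _
  have hmapadd : ∀ y z : Δ, Φ (y + z) = Φ y + Φ z := by
    intro y z
    rw [hΦdef]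
    dsimp only
    refine Prod.ext ?_ ?_
    · show Φfst ((y : Euc n) + z) = Φfst ↑y + Φfst ↑z
      exact map_add _ _ _
    · show Φint (y + z) = Φint y + Φint z
      funext i
      have h7 : ((Φint (y + z) i : ℤ) : ℝ) = ((Φint y i : ℤ) : ℝ) + ((Φint z i : ℤ) : ℝ) := by
        rw [hΦintspec (y + z) i, hΦintspec y i, hΦintspec z i]
        show (inner ℝ ((B i : U) : Euc n) ((y : Euc n) + z) : ℝ) = _
        rw [inner_add_right]
      have h8 : Φint (y + z) i = Φint y i + Φint z i := by exact_mod_cast h7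
      simpa using h8
  set eqv : Δ ≃+ ((Fin (n - (p + q)) → ℝ) × (Fin q → ℤ)) :=
    AddEquiv.mk' ⟨Φ, Ψ', hleft, hright⟩ hmapadd with heqv
  have hcontΦ : Continuous Φ := by
    rw [hΦdef]
    refine Continuous.prodMk ?_ ?_
    · exact (LinearMap.continuous_of_finiteDimensional Φfst).comp continuous_subtype_val
    · refine continuous_pi fun i => ?_
      rw [Int.isClosedEmbedding_coe_real.isEmbedding.continuous_iff]
      have : Continuous fun y : Δ => (inner ℝ ((B i : U) : Euc n) ((y : Euc n)) : ℝ) :=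
        Continuous.inner continuous_const continuous_subtype_val
      convert this using 1
      funext y
      exact hΦintspec y i
  have hcontΨ : Continuous Ψ' := by
    apply Continuous.subtype_mk
    apply Continuous.add
    · apply continuous_finset_sum
      intro i _
      exact ((continuous_apply i).comp continuous_fst).smul continuous_const
    · apply continuous_finset_sum
      intro i _
      exact ((Int.isClosedEmbedding_coe_real.continuous).comp
        ((continuous_apply i).comp continuous_snd)).smul continuous_const
  exact ⟨eqv, hcontΦ, hcontΨ⟩
end
end

section
/- The connected component of the identity Γ₀ of a closed subgroup Γ of ℝⁿ is a linear subspace of ℝⁿ, and equals the intersection over all r > 0 of the subgroups generated by Γ ∩ closedBall(0, r). -/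
noncomputable section

open Metric Filter

/-- The maximal linear subspace contained in a subgroup. -/
def lineSub {n : ℕ} (Γ : AddSubgroup (Euc n)) : Submodule ℝ (Euc n) where
  carrier := {x | ∀ t : ℝ, t • x ∈ Γ}
  zero_mem' := fun t => by simpa using Γ.zero_mem
  add_mem' := fun hx hy t => by simpa [smul_add] using Γ.add_mem (hx t) (hy t)
  smul_mem' := fun c x hx t => by simpa [smul_smul] using hx (t * c)

lemma lineSub_le {n : ℕ} (Γ : AddSubgroup (Euc n)) :
    (lineSub Γ : Set (Euc n)) ⊆ Γ := fun x hx => by simpa using hx 1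

/-- A closed subgroup of ℝⁿ containing no line is discrete at 0. -/
lemma discrete_of_no_line {n : ℕ} (H : AddSubgroup (Euc n)) (hH : IsClosed (H : Set (Euc n)))
    (hno : ∀ x : Euc n, (∀ t : ℝ, t • x ∈ H) → x = 0) :
    ∃ ε > 0, ∀ x ∈ H, ‖x‖ < ε → x = 0 := by
  by_contra h
  push_neg at h
  have hseq : ∀ k : ℕ, ∃ x : Euc n, x ∈ H ∧ ‖x‖ < 1/(k+1) ∧ x ≠ 0 := by
    intro k
    obtain ⟨x, hx, hxn, hx0⟩ := h (1/(k+1)) (by positivity)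
    exact ⟨x, hx, hxn, hx0⟩
  choose x hxH hxn hx0 using hseq
  set u : ℕ → Euc n := fun k => ‖x k‖⁻¹ • x k with hu
  have hus : ∀ k, u k ∈ sphere (0 : Euc n) 1 := by
    intro k
    simp [hu, norm_smul, abs_of_nonneg, inv_mul_cancel₀ (norm_ne_zero_iff.2 (hx0 k))]
  obtain ⟨v, hv, φ, hφ, hvt⟩ := (isCompact_sphere (0 : Euc n) 1).tendsto_subseq hus
  have hxlim : Tendsto (fun k => ‖x (φ k)‖) atTop (nhds 0) := by
    have h1 : Tendsto (fun k : ℕ => 1/((φ k : ℝ)+1)) atTop (nhds 0) := by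
      apply Tendsto.comp tendsto_one_div_add_atTop_nhds_zero_nat
      exact hφ.tendsto_atTop
    refine squeeze_zero (fun k => norm_nonneg _) (fun k => (hxn (φ k)).le) h1
  have hvH : ∀ t : ℝ, t • v ∈ H := by
    intro t
    have hlim : Tendsto (fun k => (⌊t / ‖x (φ k)‖⌋ : ℝ) • x (φ k)) atTop (nhds (t • v)) := by
      have heq : ∀ k, (⌊t / ‖x (φ k)‖⌋ : ℝ) • x (φ k)
          = ((⌊t / ‖x (φ k)‖⌋ : ℝ) * ‖x (φ k)‖) • u (φ k) := by
        intro k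
        rw [hu, smul_smul, mul_assoc, mul_inv_cancel₀ (norm_ne_zero_iff.2 (hx0 (φ k))), mul_one]
      simp_rw [heq]
      refine Tendsto.smul ?_ hvt
      -- (⌊t/a⌋ : ℝ) * a → t as a → 0+, a > 0
      have hbd : ∀ k, |(⌊t / ‖x (φ k)‖⌋ : ℝ) * ‖x (φ k)‖ - t| ≤ ‖x (φ k)‖ := by
        intro k
        have ha : 0 < ‖x (φ k)‖ := norm_pos_iff.2 (hx0 (φ k))
        have h1 : (⌊t / ‖x (φ k)‖⌋ : ℝ) ≤ t / ‖x (φ k)‖ := Int.floor_le _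
        have h2 : t / ‖x (φ k)‖ - 1 ≤ (⌊t / ‖x (φ k)‖⌋ : ℝ) := (Int.sub_one_lt_floor _).le
        rw [abs_le]
        constructor
        · nlinarith [(div_le_iff₀ ha).1 (le_refl (t / ‖x (φ k)‖)), mul_le_mul_of_nonneg_right h2 ha.le,
            div_mul_cancel₀ t ha.ne']
        · nlinarith [mul_le_mul_of_nonneg_right h1 ha.le, div_mul_cancel₀ t ha.ne']
      have : Tendsto (fun k => (⌊t / ‖x (φ k)‖⌋ : ℝ) * ‖x (φ k)‖ - t) atTop (nhds 0) :=
        squeeze_zero_norm hbd hxlim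
      have := this.add_const t
      simpa using this
    have hmem : ∀ k, (⌊t / ‖x (φ k)‖⌋ : ℝ) • x (φ k) ∈ H := by
      intro k
      have := H.zsmul_mem (hxH (φ k)) ⌊t / ‖x (φ k)‖⌋
      simpa [Int.cast_smul_eq_zsmul ℝ] using this
    exact hH.mem_of_tendsto hlim (Eventually.of_forall hmem)
  have hv0 : v = 0 := hno v hvH
  rw [hv0] at hv
  simp at hv

/-- Small elements of a closed subgroup lie in its maximal subspace. -/
lemma small_mem_lineSub {n : ℕ} (Γ : AddSubgroup (Euc n)) (hΓ : IsClosed (Γ : Set (Euc n))) :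
    ∃ ε > 0, ∀ h ∈ Γ, ‖h‖ < ε → h ∈ lineSub Γ := by
  set V := lineSub Γ with hV
  set W := Vᗮ with hW
  set K : AddSubgroup (Euc n) := Γ ⊓ W.toAddSubgroup with hK
  have hKclosed : IsClosed (K : Set (Euc n)) := by
    have : (K : Set (Euc n)) = (Γ : Set (Euc n)) ∩ (W : Set (Euc n)) := rfl
    rw [this]
    exact hΓ.inter W.closed_of_finiteDimensional
  have hKno : ∀ x : Euc n, (∀ t : ℝ, t • x ∈ K) → x = 0 := by
    intro x hx
    have hxW : x ∈ W := by simpa using (hx 1).2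
    have hxV : x ∈ V := fun t => (hx t).1
    exact (Submodule.eq_bot_iff _).1 (Submodule.inf_orthogonal_eq_bot V) x ⟨hxV, hxW⟩
  obtain ⟨ε, hε, hεK⟩ := discrete_of_no_line K hKclosed hKno
  refine ⟨ε, hε, fun h hh hnorm => ?_⟩
  set p : Euc n := (Submodule.orthogonalProjection V h : Euc n) with hp
  have hpV : p ∈ V := (Submodule.orthogonalProjection V h).2
  have hresW : h - p ∈ W := Submodule.sub_starProjection_mem_orthogonal (K := V) h
  have hresΓ : h - p ∈ Γ := Γ.sub_mem hh (lineSub_le Γ hpV)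
  have hortho : (inner ℝ p (h - p) : ℝ) = 0 :=
    (Submodule.mem_orthogonal V (h - p)).1 hresW p hpV
  have hpyth : ‖h‖^2 = ‖p‖^2 + ‖h - p‖^2 := by
    have := norm_add_sq_real p (h - p)
    simpa [hortho] using this
  have hle : ‖h - p‖ ≤ ‖h‖ := by nlinarith [norm_nonneg p, norm_nonneg (h - p), norm_nonneg h]
  have : h - p = 0 := hεK _ ⟨hresΓ, hresW⟩ (lt_of_le_of_lt hle hnorm)
  have : h = p := by rwa [sub_eq_zero] at this
  rw [this]; exact hpV

/-- The connected component of the identity of a closed subgroup Γ of ℝⁿ is a linear subspace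
and equals ⋂_{r>0} of the subgroups generated by Γ ∩ closedBall(0,r). -/
theorem continuous_part_subspace (n : ℕ) (Γ : AddSubgroup (Euc n))
    (hΓ : IsClosed (Γ : Set (Euc n))) :
    (∃ V : Submodule ℝ (Euc n),
        (V : Set (Euc n)) = connectedComponentIn (Γ : Set (Euc n)) 0) ∧
    connectedComponentIn (Γ : Set (Euc n)) 0 =
      ⋂ r ∈ Set.Ioi (0 : ℝ),
        (AddSubgroup.closure ((Γ : Set (Euc n)) ∩ Metric.closedBall 0 r) : Set (Euc n)) := by
  obtain ⟨ε, hε, hsmall⟩ := small_mem_lineSub Γ hΓ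
  set V := lineSub Γ with hVdef
  have hVΓ : (V : Set (Euc n)) ⊆ Γ := lineSub_le Γ
  -- V ⊆ C
  have hVC : (V : Set (Euc n)) ⊆ connectedComponentIn (Γ : Set (Euc n)) 0 :=
    (V.convex.isPreconnected).subset_connectedComponentIn V.zero_mem hVΓ
  -- C ⊆ V
  set O : Set (Euc n) := ⋃ v ∈ (V : Set (Euc n)), ball v ε with hO
  have hOopen : IsOpen O := isOpen_biUnion fun _ _ => isOpen_ball
  have hΓO : (Γ : Set (Euc n)) ∩ O ⊆ V := by
    rintro c ⟨hcΓ, hcO⟩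
    simp only [hO, Set.mem_iUnion] at hcO
    obtain ⟨v, hv, hcv⟩ := hcO
    have h1 : c - v ∈ Γ := Γ.sub_mem hcΓ (hVΓ hv)
    have h2 : c - v ∈ V := hsmall _ h1 (by simpa [dist_eq_norm] using hcv)
    have : c = v + (c - v) := by abel
    rw [this]; exact V.add_mem hv h2
  have hVO : (V : Set (Euc n)) ⊆ O := fun v hv => by
    simp only [hO, Set.mem_iUnion]; exact ⟨v, hv, mem_ball_self hε⟩
  have hCV : connectedComponentIn (Γ : Set (Euc n)) 0 ⊆ V := by
    by_contra hcon
    obtain ⟨c, hcC, hcV⟩ := Set.not_subset.1 hcon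
    have hCconn : IsPreconnected (connectedComponentIn (Γ : Set (Euc n)) 0) :=
      isPreconnected_connectedComponentIn
    have hC0 : (0 : Euc n) ∈ connectedComponentIn (Γ : Set (Euc n)) 0 :=
      mem_connectedComponentIn Γ.zero_mem
    have hCΓ : connectedComponentIn (Γ : Set (Euc n)) 0 ⊆ Γ := connectedComponentIn_subset _ _
    have hVclosed : IsClosed (V : Set (Euc n)) := V.closed_of_finiteDimensional
    obtain ⟨z, hzC, hzO, hzV⟩ := hCconn O ((V : Set (Euc n))ᶜ) hOopen hVclosed.isOpen_compl
      (fun y hy => by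
        by_cases h : y ∈ (V : Set (Euc n))
        · exact Or.inl (hVO h)
        · exact Or.inr h)
      ⟨0, hC0, hVO V.zero_mem⟩ ⟨c, hcC, hcV⟩
    exact hzV (hΓO ⟨hCΓ hzC, hzO⟩)
  have hCeq : connectedComponentIn (Γ : Set (Euc n)) 0 = (V : Set (Euc n)) :=
    Set.Subset.antisymm hCV hVC
  refine ⟨⟨V, hCeq.symm⟩, ?_⟩
  rw [hCeq]
  ext x
  simp only [Set.mem_iInter, Set.mem_Ioi]
  constructor
  · intro hx r hr
    set m : ℕ := ⌈‖x‖ / r⌉₊ + 1 with hm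
    have hm0 : (0:ℝ) < m := by positivity
    set y : Euc n := ((m : ℝ))⁻¹ • x with hy
    have hyV : y ∈ V := V.smul_mem _ hx
    have hynorm : ‖y‖ ≤ r := by
      rw [hy, norm_smul]
      have h1 : ‖x‖ / r ≤ (m : ℝ) := le_trans (Nat.le_ceil _) (by exact_mod_cast Nat.le_succ _)
      have h2 : ‖x‖ ≤ m * r := by
        rw [div_le_iff₀ hr] at h1; linarith
      rw [norm_inv, Real.norm_natCast, inv_mul_le_iff₀ hm0]
      linarith
    have hymem : y ∈ AddSubgroup.closure ((Γ : Set (Euc n)) ∩ closedBall 0 r) :=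
      AddSubgroup.subset_closure ⟨hVΓ hyV, by simpa [dist_eq_norm] using hynorm⟩
    have := AddSubgroup.nsmul_mem _ hymem m
    have hxy : m • y = x := by
      rw [hy, ← Nat.cast_smul_eq_nsmul ℝ, smul_smul, mul_inv_cancel₀ (ne_of_gt hm0), one_smul]
    rwa [hxy] at this
  · intro hx
    have h2 : (Γ : Set (Euc n)) ∩ closedBall 0 (ε/2) ⊆ V := by
      rintro h ⟨hhΓ, hhb⟩
      exact hsmall h hhΓ (lt_of_le_of_lt (by simpa [dist_eq_norm] using hhb) (by linarith))
    have hle : AddSubgroup.closure ((Γ : Set (Euc n)) ∩ closedBall 0 (ε/2)) ≤ V.toAddSubgroup :=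
      (AddSubgroup.closure_le _).2 h2
    exact hle (hx (ε/2) (by linarith))
end
end

section
/- For compact topological spaces X and Y, the product of open cones cX × cY is homeomorphic to the open cone c(X ⋆ Y) over the join of X and Y. -/
noncomputable section

/-- Relation defining the open cone: collapse X × {0} to a point. -/
def coneRel (X : Type*) (a b : X × Set.Ico (0 : ℝ) 1) : Prop :=
  a = b ∨ ((a.2 : ℝ) = 0 ∧ (b.2 : ℝ) = 0)

/-- The open cone over X: the quotient of X × [0,1) collapsing X × {0} to a point. -/
def OpenCone (X : Type*) [TopologicalSpace X] : Type _ := Quot (coneRel X)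

instance (X : Type*) [TopologicalSpace X] : TopologicalSpace (OpenCone X) :=
  instTopologicalSpaceQuot

/-- Relation defining the join: (x,y,0) ∼ (x',y,0) and (x,y,1) ∼ (x,y',1). -/
def joinRel (X Y : Type*) (a b : X × Y × Set.Icc (0 : ℝ) 1) : Prop :=
  a = b ∨ ((a.2.2 : ℝ) = 0 ∧ (b.2.2 : ℝ) = 0 ∧ a.2.1 = b.2.1) ∨
    ((a.2.2 : ℝ) = 1 ∧ (b.2.2 : ℝ) = 1 ∧ a.1 = b.1)

/-- The join X ⋆ Y. -/
def Join (X Y : Type*) [TopologicalSpace X] [TopologicalSpace Y] : Type _ := Quot (joinRel X Y)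

instance (X Y : Type*) [TopologicalSpace X] [TopologicalSpace Y] : TopologicalSpace (Join X Y) :=
  instTopologicalSpaceQuot

/-! ### Auxiliary real functions -/

def Afun (u : ℝ) : ℝ := min 1 (2 * u)
def Bfun (u : ℝ) : ℝ := min 1 (2 * (1 - u))

lemma Afun_nonneg {u : ℝ} (h : 0 ≤ u) : 0 ≤ Afun u := le_min zero_le_one (by linarith)
lemma Afun_le_one (u : ℝ) : Afun u ≤ 1 := min_le_left _ _
lemma Bfun_nonneg {u : ℝ} (h : u ≤ 1) : 0 ≤ Bfun u := le_min zero_le_one (by linarith)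
lemma Bfun_le_one (u : ℝ) : Bfun u ≤ 1 := min_le_left _ _

lemma Afun_sub_Bfun' {u : ℝ} (h0 : 0 ≤ u) (h1 : u ≤ 1) : Afun u - Bfun u = 2 * u - 1 := by
  rcases le_total u (1/2) with h | h
  · rw [Afun, Bfun, min_eq_right (by linarith), min_eq_left (by linarith)]
  · rw [Afun, Bfun, min_eq_left (by linarith), min_eq_right (by linarith)]; ring

lemma max_Afun_Bfun {u : ℝ} (h0 : 0 ≤ u) (h1 : u ≤ 1) : max (Afun u) (Bfun u) = 1 := by
  rcases le_total u (1/2) with h | h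
  · have hB : Bfun u = 1 := min_eq_left (by linarith)
    rw [hB, max_eq_right (Afun_le_one u)]
  · have hA : Afun u = 1 := min_eq_left (by linarith)
    rw [hA, max_eq_left (Bfun_le_one u)]

lemma Afun_eq_zero_iff {u : ℝ} (h0 : 0 ≤ u) : Afun u = 0 ↔ u = 0 := by
  constructor
  · intro h
    by_contra hu
    have hu' : 0 < u := h0.lt_of_ne (Ne.symm hu)
    have : 0 < Afun u := lt_min one_pos (by linarith)
    linarith
  · intro h; simp [Afun, h]

lemma Bfun_eq_zero_iff {u : ℝ} (h1 : u ≤ 1) : Bfun u = 0 ↔ u = 1 := by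
  constructor
  · intro h
    by_contra hu
    have hu' : u < 1 := h1.lt_of_ne hu
    have : 0 < Bfun u := lt_min one_pos (by linarith)
    linarith
  · intro h; simp [Bfun, h]

lemma continuous_Afun : Continuous Afun :=
  continuous_const.min (continuous_const.mul continuous_id)

lemma continuous_Bfun : Continuous Bfun :=
  continuous_const.min (continuous_const.mul (continuous_const.sub continuous_id))

/-! ### The relations are equivalences -/

lemma coneRel_equivalence (X : Type*) : Equivalence (coneRel X) where
  refl _ := Or.inl rfl
  symm := by rintro a b (rfl | ⟨h1, h2⟩); exacts [Or.inl rfl, Or.inr ⟨h2, h1⟩]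
  trans := by
    rintro a b c hab hbc
    rcases hab with rfl | ⟨h1, h2⟩
    · exact hbc
    rcases hbc with rfl | ⟨h3, h4⟩
    · exact Or.inr ⟨h1, h2⟩
    · exact Or.inr ⟨h1, h4⟩

lemma cone_mk_eq_iff {X : Type*} {a b : X × Set.Ico (0:ℝ) 1} :
    Quot.mk (coneRel X) a = Quot.mk (coneRel X) b ↔ coneRel X a b :=
  Quot.eq.trans (coneRel_equivalence X).eqvGen_iff

lemma joinRel_equivalence (X Y : Type*) : Equivalence (joinRel X Y) where
  refl _ := Or.inl rfl
  symm := by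
    rintro a b (rfl | ⟨h1, h2, h3⟩ | ⟨h1, h2, h3⟩)
    · exact Or.inl rfl
    · exact Or.inr (Or.inl ⟨h2, h1, h3.symm⟩)
    · exact Or.inr (Or.inr ⟨h2, h1, h3.symm⟩)
  trans := by
    rintro a b c hab hbc
    rcases hab with rfl | ⟨h1, h2, h3⟩ | ⟨h1, h2, h3⟩
    · exact hbc
    · rcases hbc with rfl | ⟨h4, h5, h6⟩ | ⟨h4, h5, h6⟩
      · exact Or.inr (Or.inl ⟨h1, h2, h3⟩)
      · exact Or.inr (Or.inl ⟨h1, h5, h3.trans h6⟩)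
      · rw [h2] at h4; norm_num at h4
    · rcases hbc with rfl | ⟨h4, h5, h6⟩ | ⟨h4, h5, h6⟩
      · exact Or.inr (Or.inr ⟨h1, h2, h3⟩)
      · rw [h2] at h4; norm_num at h4
      · exact Or.inr (Or.inr ⟨h1, h5, h3.trans h6⟩)

lemma join_mk_eq_iff {X Y : Type*} {a b : X × Y × Set.Icc (0:ℝ) 1} :
    Quot.mk (joinRel X Y) a = Quot.mk (joinRel X Y) b ↔ joinRel X Y a b :=
  Quot.eq.trans (joinRel_equivalence X Y).eqvGen_iff
/-! ### Closedness / properness of the quotient maps -/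

section ConeMaps

variable {X : Type*} [TopologicalSpace X]

lemma isClosedMap_coneMk : IsClosedMap (Quot.mk (coneRel X)) := by
  intro C hC
  rw [← isQuotientMap_quot_mk.isClosed_preimage]
  have hset : Quot.mk (coneRel X) ⁻¹' (Quot.mk (coneRel X) '' C) =
      C ∪ ({p : X × Set.Ico (0:ℝ) 1 | (p.2 : ℝ) = 0} ∩
        {_p : X × Set.Ico (0:ℝ) 1 | ∃ c ∈ C, ((c.2 : ℝ) = 0)}) := by
    ext p
    simp only [Set.mem_preimage, Set.mem_image, Set.mem_union, Set.mem_inter_iff,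
      Set.mem_setOf_eq]
    constructor
    · rintro ⟨c, hc, hm⟩
      rcases cone_mk_eq_iff.mp hm with rfl | ⟨h1, h2⟩
      · exact Or.inl hc
      · exact Or.inr ⟨h2, c, hc, h1⟩
    · rintro (hp | ⟨hp0, c, hc, hc0⟩)
      · exact ⟨p, hp, rfl⟩
      · exact ⟨c, hc, cone_mk_eq_iff.mpr (Or.inr ⟨hc0, hp0⟩)⟩
  rw [hset]
  refine hC.union (IsClosed.inter ?_ ?_)
  · exact isClosed_eq (continuous_subtype_val.comp continuous_snd) continuous_const
  · by_cases h : ∃ c ∈ C, ((c.2 : ℝ) = 0)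
    · have : {_p : X × Set.Ico (0:ℝ) 1 | ∃ c ∈ C, ((c.2 : ℝ) = 0)} = Set.univ :=
        Set.eq_univ_of_forall fun _ => h
      rw [this]; exact isClosed_univ
    · have : {_p : X × Set.Ico (0:ℝ) 1 | ∃ c ∈ C, ((c.2 : ℝ) = 0)} = ∅ :=
        Set.eq_empty_iff_forall_notMem.mpr fun _ hp => h hp
      rw [this]; exact isClosed_empty

lemma isProperMap_coneMk [CompactSpace X] : IsProperMap (Quot.mk (coneRel X)) := by
  rw [isProperMap_iff_isClosedMap_and_compact_fibers]
  refine ⟨continuous_quot_mk, isClosedMap_coneMk, ?_⟩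
  intro q
  induction q using Quot.ind with
  | _ p =>
    by_cases h0 : (p.2 : ℝ) = 0
    · have hfib : Quot.mk (coneRel X) ⁻¹' {Quot.mk (coneRel X) p} =
          (Set.univ : Set X) ×ˢ {(⟨0, by norm_num⟩ : Set.Ico (0:ℝ) 1)} := by
        ext c
        simp only [Set.mem_preimage, Set.mem_singleton_iff, Set.mem_prod, Set.mem_univ, true_and]
        rw [cone_mk_eq_iff]
        constructor
        · rintro (rfl | ⟨hc, -⟩)
          · exact Subtype.ext h0
          · exact Subtype.ext hc
        · intro hc
          exact Or.inr ⟨congrArg Subtype.val hc, h0⟩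
      rw [hfib]; exact isCompact_univ.prod isCompact_singleton
    · have hfib : Quot.mk (coneRel X) ⁻¹' {Quot.mk (coneRel X) p} = {p} := by
        ext c
        simp only [Set.mem_preimage, Set.mem_singleton_iff]
        rw [cone_mk_eq_iff]
        constructor
        · rintro (rfl | ⟨-, hp⟩)
          · rfl
          · exact absurd hp h0
        · rintro rfl; exact Or.inl rfl
      rw [hfib]; exact isCompact_singleton

end ConeMaps

def e0 : Set.Icc (0:ℝ) 1 := ⟨0, by norm_num⟩
def e1 : Set.Icc (0:ℝ) 1 := ⟨1, by norm_num⟩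

section JoinMaps

variable {X Y : Type*} [TopologicalSpace X] [TopologicalSpace Y]

lemma isClosedMap_joinMk [CompactSpace X] [CompactSpace Y] :
    IsClosedMap (Quot.mk (joinRel X Y)) := by
  intro C hC
  rw [← isQuotientMap_quot_mk.isClosed_preimage]
  have hD0c : IsClosed {y : Y | ∃ x, (x, y, e0) ∈ C} := by
    have : {y : Y | ∃ x, (x, y, e0) ∈ C} =
        Prod.snd '' ((fun q : X × Y => (q.1, q.2, e0)) ⁻¹' C) := by
      ext y
      constructor
      · rintro ⟨x, hx⟩; exact ⟨(x, y), hx, rfl⟩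
      · rintro ⟨⟨x, y'⟩, h, rfl⟩; exact ⟨x, h⟩
    rw [this]
    exact isClosedMap_snd_of_compactSpace _ (hC.preimage (by fun_prop))
  have hD1c : IsClosed {x : X | ∃ y, (x, y, e1) ∈ C} := by
    have : {x : X | ∃ y, (x, y, e1) ∈ C} =
        Prod.fst '' ((fun q : X × Y => (q.1, q.2, e1)) ⁻¹' C) := by
      ext x
      constructor
      · rintro ⟨y, hy⟩; exact ⟨(x, y), hy, rfl⟩
      · rintro ⟨⟨x', y⟩, h, rfl⟩; exact ⟨y, h⟩
    rw [this]
    exact isClosedMap_fst_of_compactSpace _ (hC.preimage (by fun_prop))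
  have hset : Quot.mk (joinRel X Y) ⁻¹' (Quot.mk (joinRel X Y) '' C) =
      (C ∪ ({p : X × Y × Set.Icc (0:ℝ) 1 | p.2.2 = e0} ∩
            {p : X × Y × Set.Icc (0:ℝ) 1 | p.2.1 ∈ {y : Y | ∃ x, (x, y, e0) ∈ C}})) ∪
        ({p : X × Y × Set.Icc (0:ℝ) 1 | p.2.2 = e1} ∩
            {p : X × Y × Set.Icc (0:ℝ) 1 | p.1 ∈ {x : X | ∃ y, (x, y, e1) ∈ C}}) := by
    ext p
    simp only [Set.mem_preimage, Set.mem_image, Set.mem_union, Set.mem_inter_iff,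
      Set.mem_setOf_eq]
    constructor
    · rintro ⟨c, hc, hm⟩
      rcases join_mk_eq_iff.mp hm with rfl | ⟨h0c, h0p, hy⟩ | ⟨h1c, h1p, hx⟩
      · exact Or.inl (Or.inl hc)
      · refine Or.inl (Or.inr ⟨Subtype.ext h0p, c.1, ?_⟩)
        have hce : (c.1, p.2.1, e0) = c :=
          Prod.ext_iff.mpr ⟨rfl, Prod.ext_iff.mpr ⟨hy.symm, (Subtype.ext h0c).symm⟩⟩
        rw [hce]; exact hc
      · refine Or.inr ⟨Subtype.ext h1p, c.2.1, ?_⟩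
        have hce : (p.1, c.2.1, e1) = c :=
          Prod.ext_iff.mpr ⟨hx.symm, Prod.ext_iff.mpr ⟨rfl, (Subtype.ext h1c).symm⟩⟩
        rw [hce]; exact hc
    · rintro ((hp | ⟨he, x', hx'⟩) | ⟨he, y', hy'⟩)
      · exact ⟨p, hp, rfl⟩
      · exact ⟨(x', p.2.1, e0), hx',
          join_mk_eq_iff.mpr (Or.inr (Or.inl ⟨rfl, congrArg Subtype.val he, rfl⟩))⟩
      · exact ⟨(p.1, y', e1), hy',
          join_mk_eq_iff.mpr (Or.inr (Or.inr ⟨rfl, congrArg Subtype.val he, rfl⟩))⟩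
  rw [hset]
  have hc0 : IsClosed {p : X × Y × Set.Icc (0:ℝ) 1 | p.2.2 = e0} :=
    isClosed_singleton.preimage (by fun_prop : Continuous fun p : X × Y × Set.Icc (0:ℝ) 1 => p.2.2)
  have hc1 : IsClosed {p : X × Y × Set.Icc (0:ℝ) 1 | p.2.2 = e1} :=
    isClosed_singleton.preimage (by fun_prop : Continuous fun p : X × Y × Set.Icc (0:ℝ) 1 => p.2.2)
  exact ((hC.union (hc0.inter (hD0c.preimage (by fun_prop)))).union
    (hc1.inter (hD1c.preimage (by fun_prop))))

lemma isProperMap_joinMk [CompactSpace X] [CompactSpace Y] :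
    IsProperMap (Quot.mk (joinRel X Y)) := by
  rw [isProperMap_iff_isClosedMap_and_compact_fibers]
  refine ⟨continuous_quot_mk, isClosedMap_joinMk, ?_⟩
  intro q
  induction q using Quot.ind with
  | _ p =>
    by_cases h0 : (p.2.2 : ℝ) = 0
    · have hfib : Quot.mk (joinRel X Y) ⁻¹' {Quot.mk (joinRel X Y) p} =
          (Set.univ : Set X) ×ˢ ({p.2.1} ×ˢ {e0}) := by
        ext c
        simp only [Set.mem_preimage, Set.mem_singleton_iff, Set.mem_prod, Set.mem_univ, true_and]
        rw [join_mk_eq_iff]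
        constructor
        · rintro (rfl | ⟨hc0, -, hy⟩ | ⟨-, h1p, -⟩)
          · exact ⟨rfl, Subtype.ext h0⟩
          · exact ⟨hy, Subtype.ext hc0⟩
          · rw [h0] at h1p; norm_num at h1p
        · rintro ⟨hy, he⟩
          exact Or.inr (Or.inl ⟨congrArg Subtype.val he, h0, hy⟩)
      rw [hfib]; exact isCompact_univ.prod (isCompact_singleton.prod isCompact_singleton)
    · by_cases h1 : (p.2.2 : ℝ) = 1
      · have hfib : Quot.mk (joinRel X Y) ⁻¹' {Quot.mk (joinRel X Y) p} =
            {p.1} ×ˢ ((Set.univ : Set Y) ×ˢ {e1}) := by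
          ext c
          simp only [Set.mem_preimage, Set.mem_singleton_iff, Set.mem_prod, Set.mem_univ,
            true_and]
          rw [join_mk_eq_iff]
          constructor
          · rintro (rfl | ⟨-, h0p, -⟩ | ⟨hc1, -, hx⟩)
            · exact ⟨rfl, Subtype.ext h1⟩
            · exact absurd h0p h0
            · exact ⟨hx, Subtype.ext hc1⟩
          · rintro ⟨hx, he⟩
            exact Or.inr (Or.inr ⟨congrArg Subtype.val he, h1, hx⟩)
        rw [hfib]; exact isCompact_singleton.prod (isCompact_univ.prod isCompact_singleton)
      · have hfib : Quot.mk (joinRel X Y) ⁻¹' {Quot.mk (joinRel X Y) p} = {p} := by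
          ext c
          simp only [Set.mem_preimage, Set.mem_singleton_iff]
          rw [join_mk_eq_iff]
          constructor
          · rintro (rfl | ⟨-, h0p, -⟩ | ⟨-, h1p, -⟩)
            · rfl
            · exact absurd h0p h0
            · exact absurd h1p h1
          · rintro rfl; exact Or.inl rfl
        rw [hfib]; exact isCompact_singleton

end JoinMaps
/-! ### The comparison map downstairs -/

lemma memIco (r : Set.Ico (0:ℝ) 1) {a : ℝ} (h0 : 0 ≤ a) (h1 : a ≤ 1) :
    (r : ℝ) * a ∈ Set.Ico (0:ℝ) 1 :=
  ⟨mul_nonneg r.2.1 h0, lt_of_le_of_lt (mul_le_of_le_one_right r.2.1 h1) r.2.2⟩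

def tauFun (q : Set.Icc (0:ℝ) 1 × Set.Ico (0:ℝ) 1) : Set.Ico (0:ℝ) 1 × Set.Ico (0:ℝ) 1 :=
  (⟨(q.2 : ℝ) * Afun q.1, memIco q.2 (Afun_nonneg q.1.2.1) (Afun_le_one _)⟩,
   ⟨(q.2 : ℝ) * Bfun q.1, memIco q.2 (Bfun_nonneg q.1.2.2) (Bfun_le_one _)⟩)

lemma continuous_tauFun : Continuous tauFun := by
  refine Continuous.prodMk (Continuous.subtype_mk ?_ _) (Continuous.subtype_mk ?_ _)
  · exact (continuous_subtype_val.comp continuous_snd).mul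
      (continuous_Afun.comp (continuous_subtype_val.comp continuous_fst))
  · exact (continuous_subtype_val.comp continuous_snd).mul
      (continuous_Bfun.comp (continuous_subtype_val.comp continuous_fst))

lemma isProperMap_tauFun : IsProperMap tauFun := by
  rw [isProperMap_iff_isCompact_preimage]
  refine ⟨continuous_tauFun, fun K hK => ?_⟩
  rcases K.eq_empty_or_nonempty with rfl | hne
  · simp only [Set.preimage_empty]; exact isCompact_empty
  · set m : Set.Ico (0:ℝ) 1 × Set.Ico (0:ℝ) 1 → ℝ := fun q => max (q.1 : ℝ) (q.2 : ℝ) with hm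
    have hmc : Continuous m :=
      (continuous_subtype_val.comp continuous_fst).max (continuous_subtype_val.comp continuous_snd)
    have himg : IsCompact (m '' K) := hK.image hmc
    set c := sSup (m '' K) with hc
    obtain ⟨q0, hq0K, hq0⟩ := himg.sSup_mem (hne.image m)
    have hc1 : c < 1 := by rw [hc, ← hq0]; exact max_lt q0.1.2.2 q0.2.2.2
    have hc0 : (0:ℝ) ≤ c := by
      rw [hc, ← hq0]; exact le_max_of_le_left q0.1.2.1
    have hub : ∀ q ∈ K, m q ≤ c := fun q hq => le_csSup himg.bddAbove ⟨q, hq, rfl⟩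
    have hScompact : IsCompact {r : Set.Ico (0:ℝ) 1 | (r : ℝ) ≤ c} := by
      rw [Subtype.isCompact_iff]
      have himS : Subtype.val '' {r : Set.Ico (0:ℝ) 1 | (r : ℝ) ≤ c} = Set.Icc 0 c := by
        ext t
        constructor
        · rintro ⟨r, hr, rfl⟩; exact ⟨r.2.1, hr⟩
        · rintro ⟨ht0, ht1⟩; exact ⟨⟨t, ht0, lt_of_le_of_lt ht1 hc1⟩, ht1, rfl⟩
      rw [himS]; exact isCompact_Icc
    refine IsCompact.of_isClosed_subset (isCompact_univ.prod hScompact)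
      ((hK.isClosed).preimage continuous_tauFun) ?_
    rintro ⟨u, r⟩ hq
    refine ⟨Set.mem_univ _, ?_⟩
    have hmt : m (tauFun (u, r)) = (r : ℝ) := by
      show max ((r : ℝ) * Afun u) ((r : ℝ) * Bfun u) = (r : ℝ)
      rw [← mul_max_of_nonneg _ _ r.2.1, max_Afun_Bfun u.2.1 u.2.2, mul_one]
    have := hub _ hq
    rw [hmt] at this
    exact this

section Shuffles

variable (X Y : Type*) [TopologicalSpace X] [TopologicalSpace Y]

def shuffle1 : ((X × Y × Set.Icc (0:ℝ) 1) × Set.Ico (0:ℝ) 1) ≃ₜ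
    ((X × Y) × (Set.Icc (0:ℝ) 1 × Set.Ico (0:ℝ) 1)) where
  toFun p := ((p.1.1, p.1.2.1), (p.1.2.2, p.2))
  invFun q := ((q.1.1, q.1.2, q.2.1), q.2.2)
  left_inv _ := rfl
  right_inv _ := rfl
  continuous_toFun := by fun_prop
  continuous_invFun := by fun_prop

def shuffle2 : ((X × Y) × (Set.Ico (0:ℝ) 1 × Set.Ico (0:ℝ) 1)) ≃ₜ
    ((X × Set.Ico (0:ℝ) 1) × (Y × Set.Ico (0:ℝ) 1)) where
  toFun q := ((q.1.1, q.2.1), (q.1.2, q.2.2))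
  invFun p := ((p.1.1, p.2.1), (p.1.2, p.2.2))
  left_inv _ := rfl
  right_inv _ := rfl
  continuous_toFun := by fun_prop
  continuous_invFun := by fun_prop

def sigma0 : ((X × Y × Set.Icc (0:ℝ) 1) × Set.Ico (0:ℝ) 1) →
    ((X × Set.Ico (0:ℝ) 1) × (Y × Set.Ico (0:ℝ) 1)) :=
  (shuffle2 X Y) ∘ (Prod.map id tauFun) ∘ (shuffle1 X Y)

lemma isProperMap_sigma0 : IsProperMap (sigma0 X Y) :=
  ((shuffle2 X Y).isHomeomorph.isProperMap).comp
    ((isProperMap_id.prodMap isProperMap_tauFun).comp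
      ((shuffle1 X Y).isHomeomorph.isProperMap))

end Shuffles
/-! ### The map `g : c(X ⋆ Y) → cX × cY` -/

section GMap

variable {X Y : Type*} [TopologicalSpace X] [TopologicalSpace Y]

def gfun : ((X × Y × Set.Icc (0:ℝ) 1) × Set.Ico (0:ℝ) 1) → OpenCone X × OpenCone Y :=
  (Prod.map (Quot.mk (coneRel X)) (Quot.mk (coneRel Y))) ∘ (sigma0 X Y)

lemma gfun_eval (p : (X × Y × Set.Icc (0:ℝ) 1) × Set.Ico (0:ℝ) 1) :
    gfun p = (Quot.mk (coneRel X)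
        (p.1.1, ⟨(p.2 : ℝ) * Afun p.1.2.2, memIco p.2 (Afun_nonneg p.1.2.2.2.1) (Afun_le_one _)⟩),
      Quot.mk (coneRel Y)
        (p.1.2.1, ⟨(p.2 : ℝ) * Bfun p.1.2.2,
          memIco p.2 (Bfun_nonneg p.1.2.2.2.2) (Bfun_le_one _)⟩)) := rfl

lemma gfun_join (r : Set.Ico (0:ℝ) 1) {a b : X × Y × Set.Icc (0:ℝ) 1}
    (h : joinRel X Y a b) : gfun (a, r) = gfun (b, r) := by
  rcases h with rfl | ⟨h0a, h0b, hy⟩ | ⟨h1a, h1b, hx⟩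
  · rfl
  · refine Prod.ext_iff.mpr ⟨?_, ?_⟩
    · refine Quot.sound (Or.inr ⟨?_, ?_⟩)
      · show (r : ℝ) * Afun (a.2.2 : ℝ) = 0
        rw [h0a]; simp [Afun]
      · show (r : ℝ) * Afun (b.2.2 : ℝ) = 0
        rw [h0b]; simp [Afun]
    · have hu : (a.2.2 : ℝ) = (b.2.2 : ℝ) := by rw [h0a, h0b]
      exact congrArg (Quot.mk _) (Prod.ext_iff.mpr ⟨hy, Subtype.ext (by
        show (r : ℝ) * Bfun (a.2.2 : ℝ) = (r : ℝ) * Bfun (b.2.2 : ℝ); rw [hu])⟩)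
  · refine Prod.ext_iff.mpr ⟨?_, ?_⟩
    · have hu : (a.2.2 : ℝ) = (b.2.2 : ℝ) := by rw [h1a, h1b]
      exact congrArg (Quot.mk _) (Prod.ext_iff.mpr ⟨hx, Subtype.ext (by
        show (r : ℝ) * Afun (a.2.2 : ℝ) = (r : ℝ) * Afun (b.2.2 : ℝ); rw [hu])⟩)
    · refine Quot.sound (Or.inr ⟨?_, ?_⟩)
      · show (r : ℝ) * Bfun (a.2.2 : ℝ) = 0
        rw [h1a]; simp [Bfun]
      · show (r : ℝ) * Bfun (b.2.2 : ℝ) = 0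
        rw [h1b]; simp [Bfun]

def gJoin : Join X Y → Set.Ico (0:ℝ) 1 → OpenCone X × OpenCone Y :=
  fun j r => Quot.lift (fun a => gfun (a, r)) (fun _ _ h => gfun_join r h) j

def gMap : OpenCone (Join X Y) → OpenCone X × OpenCone Y :=
  Quot.lift (fun q => gJoin q.1 q.2) (by
    rintro ⟨j, r⟩ ⟨j', r'⟩ (h | ⟨h0, h0'⟩)
    · cases h; rfl
    · induction j using Quot.ind with
      | _ a =>
        induction j' using Quot.ind with
        | _ a' =>
          show gfun (a, r) = gfun (a', r')
          refine Prod.ext_iff.mpr ⟨Quot.sound (Or.inr ⟨?_, ?_⟩), Quot.sound (Or.inr ⟨?_, ?_⟩)⟩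
          · show (r : ℝ) * Afun (a.2.2 : ℝ) = 0
            rw [show (r : ℝ) = 0 from h0, zero_mul]
          · show (r' : ℝ) * Afun (a'.2.2 : ℝ) = 0
            rw [show (r' : ℝ) = 0 from h0', zero_mul]
          · show (r : ℝ) * Bfun (a.2.2 : ℝ) = 0
            rw [show (r : ℝ) = 0 from h0, zero_mul]
          · show (r' : ℝ) * Bfun (a'.2.2 : ℝ) = 0
            rw [show (r' : ℝ) = 0 from h0', zero_mul])

end GMap
/-! ### Arithmetic for surjectivity -/

lemma key_mem (s t : ℝ) (hs : 0 ≤ s) (ht : 0 ≤ t) :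
    (if s ≤ t then s / (2 * t) else 1 - t / (2 * s)) ∈ Set.Icc (0:ℝ) 1 := by
  split_ifs with h
  · rcases ht.eq_or_lt with heq | hpos
    · rw [← heq]; norm_num
    · exact ⟨div_nonneg hs (by linarith), by
        rw [div_le_one (by linarith)]; linarith⟩
  · have hts : t < s := not_le.mp h
    have hspos : 0 < s := ht.trans_lt hts
    have hd0 : 0 ≤ t / (2 * s) := div_nonneg ht (by linarith)
    have hd1 : t / (2 * s) ≤ 1 := by rw [div_le_one (by linarith)]; linarith
    exact ⟨by linarith, by linarith⟩

lemma key_arith (s t : ℝ) (hs : 0 ≤ s) (ht : 0 ≤ t) :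
    (max s t) * Afun (if s ≤ t then s / (2 * t) else 1 - t / (2 * s)) = s ∧
    (max s t) * Bfun (if s ≤ t then s / (2 * t) else 1 - t / (2 * s)) = t := by
  split_ifs with h
  · rcases ht.eq_or_lt with heq | hpos
    · have hs0 : s = 0 := le_antisymm (h.trans heq.symm.le) hs
      constructor <;> simp [hs0, ← heq, Afun, Bfun]
    · have hmax : max s t = t := max_eq_right h
      have h2 : 2 * (s / (2 * t)) = s / t := by field_simp
      have hA : Afun (s / (2 * t)) = s / t := by
        rw [Afun, h2]; exact min_eq_right ((div_le_one hpos).mpr h)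
      have hB : Bfun (s / (2 * t)) = 1 := by
        have h3 : 2 * (1 - s / (2 * t)) = 2 - s / t := by rw [mul_sub, h2]; ring
        have h4 : s / t ≤ 1 := (div_le_one hpos).mpr h
        rw [Bfun, h3]; exact min_eq_left (by linarith)
      constructor
      · rw [hmax, hA, mul_comm, div_mul_cancel₀ s hpos.ne']
      · rw [hmax, hB, mul_one]
  · have hts : t < s := not_le.mp h
    have hspos : 0 < s := ht.trans_lt hts
    have hmax : max s t = s := max_eq_left hts.le
    have h2 : 2 * (t / (2 * s)) = t / s := by field_simp
    have hB : Bfun (1 - t / (2 * s)) = t / s := by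
      have h3 : (1 : ℝ) - (1 - t / (2*s)) = t / (2*s) := by ring
      rw [Bfun, h3, h2]; exact min_eq_right ((div_le_one hspos).mpr hts.le)
    have hA : Afun (1 - t / (2 * s)) = 1 := by
      have h4 : t / s ≤ 1 := (div_le_one hspos).mpr hts.le
      have h3 : 2 * (1 - t / (2 * s)) = 2 - t / s := by rw [mul_sub, h2]; ring
      rw [Afun, h3]; exact min_eq_left (by linarith)
    constructor
    · rw [hmax, hA, mul_one]
    · rw [hmax, hB, mul_comm, div_mul_cancel₀ t hspos.ne']

lemma coneRel_val_eq {X : Type*} {a b : X × Set.Ico (0:ℝ) 1} (h : coneRel X a b) :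
    (a.2 : ℝ) = (b.2 : ℝ) := by
  rcases h with rfl | ⟨h1, h2⟩
  · rfl
  · rw [h1, h2]
/-- The product of the open cones over compact spaces X and Y is homeomorphic to the open cone
over their join: cX × cY ≃ c(X ⋆ Y). -/
theorem cone_prod_cone_homeo_cone_join (X Y : Type*) [TopologicalSpace X] [TopologicalSpace Y]
    [CompactSpace X] [CompactSpace Y] :
    Nonempty ((OpenCone X × OpenCone Y) ≃ₜ OpenCone (Join X Y)) := by
  classical
  set Qm : (X × Y × Set.Icc (0:ℝ) 1) × Set.Ico (0:ℝ) 1 → OpenCone (Join X Y) :=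
    fun p => Quot.mk (coneRel (Join X Y)) (Quot.mk (joinRel X Y) p.1, p.2) with hQmdef
  have hQc : Continuous Qm := continuous_quot_mk.comp
    ((continuous_quot_mk.comp continuous_fst).prodMk continuous_snd)
  have hQs : Function.Surjective Qm := by
    intro q
    induction q using Quot.ind with
    | _ p =>
      obtain ⟨j, r⟩ := p
      induction j using Quot.ind with
      | _ a => exact ⟨(a, r), rfl⟩
  have hQclosed : IsClosedMap Qm := by
    have h1 : IsClosedMap (Prod.map (Quot.mk (joinRel X Y))
        (id : Set.Ico (0:ℝ) 1 → Set.Ico (0:ℝ) 1)) :=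
      (isProperMap_joinMk.prodMap isProperMap_id).isClosedMap
    exact IsClosedMap.comp isClosedMap_coneMk h1
  have hQ := hQclosed.isQuotientMap hQc hQs
  have hgc : Continuous (gMap : OpenCone (Join X Y) → OpenCone X × OpenCone Y) := by
    rw [hQ.continuous_iff]
    exact (continuous_quot_mk.prodMap continuous_quot_mk).comp (isProperMap_sigma0 X Y).continuous
  have hgclosed : IsClosedMap (gMap : OpenCone (Join X Y) → OpenCone X × OpenCone Y) := by
    intro C hC
    have himg : gMap '' C =
        (Prod.map (Quot.mk (coneRel X)) (Quot.mk (coneRel Y))) ''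
          ((sigma0 X Y) '' (Qm ⁻¹' C)) := by
      calc gMap '' C = gMap '' (Qm '' (Qm ⁻¹' C)) := by rw [Set.image_preimage_eq C hQs]
      _ = (gMap ∘ Qm) '' (Qm ⁻¹' C) := (Set.image_comp _ _ _).symm
      _ = (((Prod.map (Quot.mk (coneRel X)) (Quot.mk (coneRel Y))) ∘ (sigma0 X Y)) ''
            (Qm ⁻¹' C) : Set (OpenCone X × OpenCone Y)) := rfl
      _ = _ := Set.image_comp _ _ _
    rw [himg]
    exact ((isProperMap_coneMk (X := X)).prodMap (isProperMap_coneMk (X := Y))).isClosedMap _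
      ((isProperMap_sigma0 X Y).isClosedMap _ (hC.preimage hQc))
  have hsurj : Function.Surjective (gMap : OpenCone (Join X Y) → OpenCone X × OpenCone Y) := by
    rintro ⟨a, b⟩
    obtain ⟨⟨x, s⟩, rfl⟩ := Quot.exists_rep a
    obtain ⟨⟨y, t⟩, rfl⟩ := Quot.exists_rep b
    have hu0m : (if (s:ℝ) ≤ (t:ℝ) then (s:ℝ)/(2*(t:ℝ)) else 1 - (t:ℝ)/(2*(s:ℝ)))
        ∈ Set.Icc (0:ℝ) 1 := key_mem _ _ s.2.1 t.2.1
    have hr0m : max (s:ℝ) (t:ℝ) ∈ Set.Ico (0:ℝ) 1 :=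
      ⟨le_max_of_le_left s.2.1, max_lt s.2.2 t.2.2⟩
    refine ⟨Quot.mk _ (Quot.mk _ (x, y, ⟨_, hu0m⟩), ⟨_, hr0m⟩), ?_⟩
    have hk := key_arith (s:ℝ) (t:ℝ) s.2.1 t.2.1
    show gfun ((x, y, ⟨_, hu0m⟩), ⟨_, hr0m⟩) = _
    rw [gfun_eval]
    exact Prod.ext_iff.mpr ⟨congrArg (Quot.mk _) (Prod.ext_iff.mpr ⟨rfl, Subtype.ext hk.1⟩),
      congrArg (Quot.mk _) (Prod.ext_iff.mpr ⟨rfl, Subtype.ext hk.2⟩)⟩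
  have hinj : Function.Injective (gMap : OpenCone (Join X Y) → OpenCone X × OpenCone Y) := by
    intro z1 z2 h
    obtain ⟨⟨j1, r1⟩, rfl⟩ := Quot.exists_rep z1
    obtain ⟨⟨x1, y1, u1⟩, rfl⟩ := Quot.exists_rep j1
    obtain ⟨⟨j2, r2⟩, rfl⟩ := Quot.exists_rep z2
    obtain ⟨⟨x2, y2, u2⟩, rfl⟩ := Quot.exists_rep j2
    have h' : gfun ((x1, y1, u1), r1) = gfun ((x2, y2, u2), r2) := h
    rw [gfun_eval, gfun_eval] at h'
    have hX := cone_mk_eq_iff.mp (congrArg Prod.fst h')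
    have hY := cone_mk_eq_iff.mp (congrArg Prod.snd h')
    have hA : (r1:ℝ) * Afun (u1:ℝ) = (r2:ℝ) * Afun (u2:ℝ) := coneRel_val_eq hX
    have hB : (r1:ℝ) * Bfun (u1:ℝ) = (r2:ℝ) * Bfun (u2:ℝ) := coneRel_val_eq hY
    have hr : (r1:ℝ) = (r2:ℝ) := by
      have e1' : max ((r1:ℝ) * Afun (u1:ℝ)) ((r1:ℝ) * Bfun (u1:ℝ)) = (r1:ℝ) := by
        rw [← mul_max_of_nonneg _ _ r1.2.1, max_Afun_Bfun u1.2.1 u1.2.2, mul_one]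
      have e2' : max ((r2:ℝ) * Afun (u2:ℝ)) ((r2:ℝ) * Bfun (u2:ℝ)) = (r2:ℝ) := by
        rw [← mul_max_of_nonneg _ _ r2.2.1, max_Afun_Bfun u2.2.1 u2.2.2, mul_one]
      rw [← e1', ← e2', hA, hB]
    by_cases hz : (r1:ℝ) = 0
    · exact Quot.sound (Or.inr ⟨hz, hr ▸ hz⟩)
    · have hAu : Afun (u1:ℝ) = Afun (u2:ℝ) := by
        have h2 : (r1:ℝ) * Afun (u2:ℝ) = (r2:ℝ) * Afun (u2:ℝ) := by rw [hr]
        exact mul_left_cancel₀ hz (hA.trans h2.symm)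
      have hBu : Bfun (u1:ℝ) = Bfun (u2:ℝ) := by
        have h2 : (r1:ℝ) * Bfun (u2:ℝ) = (r2:ℝ) * Bfun (u2:ℝ) := by rw [hr]
        exact mul_left_cancel₀ hz (hB.trans h2.symm)
      have huu : (u1:ℝ) = (u2:ℝ) := by
        have d1 := Afun_sub_Bfun' u1.2.1 u1.2.2
        have d2 := Afun_sub_Bfun' u2.2.1 u2.2.2
        rw [hAu, hBu] at d1
        linarith
      have hu12 : u1 = u2 := Subtype.ext huu
      have hr12 : r1 = r2 := Subtype.ext hr
      subst hu12
      subst hr12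
      refine congrArg (fun j => Quot.mk (coneRel (Join X Y)) (j, r1)) ?_
      by_cases hA0 : Afun (u1:ℝ) = 0
      · have hu0 : (u1:ℝ) = 0 := (Afun_eq_zero_iff u1.2.1).mp hA0
        have hB1 : Bfun (u1:ℝ) = 1 := by
          have hmx := max_Afun_Bfun u1.2.1 u1.2.2
          rw [hA0, max_eq_right (Bfun_nonneg u1.2.2)] at hmx
          exact hmx
        have hyv : y1 = y2 := by
          rcases hY with heq | ⟨hv, -⟩
          · exact congrArg Prod.fst heq
          · exfalso
            have hv' : (r1:ℝ) * Bfun (u1:ℝ) = 0 := hv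
            rw [hB1, mul_one] at hv'
            exact hz hv'
        exact Quot.sound (Or.inr (Or.inl ⟨hu0, hu0, hyv⟩))
      · by_cases hB0 : Bfun (u1:ℝ) = 0
        · have hu1' : (u1:ℝ) = 1 := (Bfun_eq_zero_iff u1.2.2).mp hB0
          have hA1 : Afun (u1:ℝ) = 1 := by
            have hmx := max_Afun_Bfun u1.2.1 u1.2.2
            rw [hB0, max_eq_left (Afun_nonneg u1.2.1)] at hmx
            exact hmx
          have hxv : x1 = x2 := by
            rcases hX with heq | ⟨hv, -⟩
            · exact congrArg Prod.fst heq
            · exfalso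
              have hv' : (r1:ℝ) * Afun (u1:ℝ) = 0 := hv
              rw [hA1, mul_one] at hv'
              exact hz hv'
          exact Quot.sound (Or.inr (Or.inr ⟨hu1', hu1', hxv⟩))
        · have hxv : x1 = x2 := by
            rcases hX with heq | ⟨hv, -⟩
            · exact congrArg Prod.fst heq
            · exfalso
              have hv' : (r1:ℝ) * Afun (u1:ℝ) = 0 := hv
              rcases mul_eq_zero.mp hv' with h0 | h0
              · exact hz h0
              · exact hA0 h0
          have hyv : y1 = y2 := by
            rcases hY with heq | ⟨hv, -⟩
            · exact congrArg Prod.fst heq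
            · exfalso
              have hv' : (r1:ℝ) * Bfun (u1:ℝ) = 0 := hv
              rcases mul_eq_zero.mp hv' with h0 | h0
              · exact hz h0
              · exact hB0 h0
          rw [hxv, hyv]
  have hhom : IsHomeomorph (gMap : OpenCone (Join X Y) → OpenCone X × OpenCone Y) :=
    isHomeomorph_iff_continuous_isClosedMap_bijective.mpr ⟨hgc, hgclosed, hinj, hsurj⟩
  obtain ⟨hom, -⟩ := isHomeomorph_iff_exists_homeomorph.mp hhom
  exact ⟨hom.symm⟩
end
end
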